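/- For every integer n ≥ 1 and every continuous function f : [0,1] → ℝ, lim_{ρ→∞} [F_{n,0}^ρ,…,F_{n,n}^ρ; f] = [0, 1/n, …, (n−1)/n, 1; f], the classical divided difference of f at the nodes 0, 1/n, …, (n−1)/n, 1 (that is, the coefficient of x^n in the Lagrange interpolation polynomial of f at these nodes). -/

import Mathlib

open MeasureTheory

/-- Euler Beta function `B(a,b) = ∫₀¹ t^(a-1) (1-t)^(b-1) dt`. -/
noncomputable def betaFn (a b : ℝ) : ℝ :=
  ∫ t in (0:ℝ)..1, t ^ (a - 1) * (1 - t) ^ (b - 1)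

/-- The functionals `F_{n,k}^ρ`. -/
noncomputable def Ffun (n k : ℕ) (ρ : ℝ) (f : ℝ → ℝ) : ℝ :=
  if k = 0 then f 0
  else if k = n then f 1
  else (betaFn ((k : ℝ) * ρ) (((n : ℝ) - (k : ℝ)) * ρ))⁻¹ *
    ∫ t in (0:ℝ)..1, t ^ ((k : ℝ) * ρ - 1) * (1 - t) ^ (((n : ℝ) - (k : ℝ)) * ρ - 1) * f t

/-- Bernstein basis polynomial `p_{n,k}(x)`. -/
noncomputable def bern (n k : ℕ) (x : ℝ) : ℝ :=
  (n.choose k : ℝ) * x ^ k * (1 - x) ^ (n - k)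

/-- The operator `U_n^ρ`. -/
noncomputable def Uop (n : ℕ) (ρ : ℝ) (f : ℝ → ℝ) (x : ℝ) : ℝ :=
  ∑ k ∈ Finset.range (n + 1), Ffun n k ρ f * bern n k x

open intervalIntegral Filter Set

lemma rpow_mul_pow {a : ℝ} (ha : 0 < a) (j : ℕ) {t : ℝ} (ht : 0 ≤ t) :
    t ^ (a - 1) * t ^ j = t ^ (a + j - 1) := by
  rcases eq_or_lt_of_le ht with h | h
  · subst h  -- wrong direction? ht : 0 = t
    cases j with
    | zero => simp
    | succ m =>
      rw [zero_pow (Nat.succ_ne_zero m), mul_zero, eq_comm, Real.zero_rpow]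
      have : (0:ℝ) ≤ (m:ℝ) := Nat.cast_nonneg m
      push_cast
      intro hcon
      linarith
  · rw [← Real.rpow_natCast t j, ← Real.rpow_add h]
    congr 1
    ring

lemma betaIntegral_ofReal (a b : ℝ) :
    Complex.betaIntegral a b = (betaFn a b : ℂ) := by
  rw [betaFn, ← intervalIntegral.integral_ofReal]
  refine intervalIntegral.integral_congr fun t ht => ?_
  rw [Set.uIcc_of_le (zero_le_one : (0:ℝ) ≤ 1)] at ht
  obtain ⟨ht0, ht1⟩ := ht
  rw [Complex.ofReal_mul, Complex.ofReal_cpow ht0, Complex.ofReal_cpow (by linarith : (0:ℝ) ≤ 1 - t)]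
  push_cast
  ring

lemma betaFn_eq_Gamma {a b : ℝ} (ha : 0 < a) (hb : 0 < b) :
    betaFn a b = Real.Gamma a * Real.Gamma b / Real.Gamma (a + b) := by
  have h := Complex.Gamma_mul_Gamma_eq_betaIntegral
    (s := (a:ℂ)) (t := (b:ℂ)) (by simpa using ha) (by simpa using hb)
  rw [betaIntegral_ofReal] at h
  have h2 : (Real.Gamma a : ℂ) * Real.Gamma b = (Real.Gamma (a+b) : ℂ) * betaFn a b := by
    rw [← Complex.Gamma_ofReal, ← Complex.Gamma_ofReal, ← Complex.Gamma_ofReal]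
    push_cast
    exact h
  have h3 : Real.Gamma a * Real.Gamma b = Real.Gamma (a+b) * betaFn a b := by
    exact_mod_cast h2
  have hG : Real.Gamma (a + b) ≠ 0 := (Real.Gamma_pos_of_pos (by linarith)).ne'
  field_simp
  linarith [h3]

lemma betaFn_pos {a b : ℝ} (ha : 0 < a) (hb : 0 < b) : 0 < betaFn a b := by
  rw [betaFn_eq_Gamma ha hb]
  have := Real.Gamma_pos_of_pos ha
  have := Real.Gamma_pos_of_pos hb
  have := Real.Gamma_pos_of_pos (show (0:ℝ) < a + b by linarith)
  positivity

lemma betaFn_succ {a b : ℝ} (ha : 0 < a) (hb : 0 < b) :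
    betaFn (a + 1) b = a / (a + b) * betaFn a b := by
  rw [betaFn_eq_Gamma (by linarith) hb, betaFn_eq_Gamma ha hb,
    show a + 1 + b = (a + b) + 1 by ring, Real.Gamma_add_one ha.ne',
    Real.Gamma_add_one (show a + b ≠ 0 by positivity)]
  have h1 : Real.Gamma (a + b) ≠ 0 := (Real.Gamma_pos_of_pos (by linarith)).ne'
  have h2 : a + b ≠ 0 := by positivity
  field_simp

lemma betaIntegrable {a b : ℝ} (ha : 0 < a) (hb : 0 < b) :
    IntervalIntegrable (fun t => t ^ (a - 1) * (1 - t) ^ (b - 1)) volume 0 1 := by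
  have h := Complex.betaIntegral_convergent (u := (a:ℂ)) (v := (b:ℂ))
    (by simpa using ha) (by simpa using hb)
  rw [intervalIntegrable_iff] at h ⊢
  have := h.re
  refine MeasureTheory.IntegrableOn.congr_fun this ?_ measurableSet_uIoc
  intro t ht
  rw [Set.uIoc_of_le (zero_le_one : (0:ℝ) ≤ 1)] at ht
  obtain ⟨ht0, ht1⟩ := ht
  have e : ((t:ℂ) ^ ((a:ℂ)-1) * (1-(t:ℂ)) ^ ((b:ℂ)-1))
      = ((t ^ (a-1) * (1-t) ^ (b-1) : ℝ) : ℂ) := by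
    rw [Complex.ofReal_mul, Complex.ofReal_cpow ht0.le,
      Complex.ofReal_cpow (by linarith : (0:ℝ) ≤ 1 - t)]
    push_cast
    ring
  simp only [e]
  simp

lemma weight_meas {a b : ℝ} :
    Measurable (fun t : ℝ => t ^ (a - 1) * (1 - t) ^ (b - 1)) := by
  fun_prop

lemma weight_nonneg {a b : ℝ} {t : ℝ} (ht0 : 0 ≤ t) (ht1 : t ≤ 1) :
    0 ≤ t ^ (a - 1) * (1 - t) ^ (b - 1) :=
  mul_nonneg (Real.rpow_nonneg ht0 _) (Real.rpow_nonneg (by linarith) _)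

lemma weight_mul_integrable {a b : ℝ} (ha : 0 < a) (hb : 0 < b) {f : ℝ → ℝ}
    (hf : ContinuousOn f (Set.Icc 0 1)) :
    IntervalIntegrable (fun t => t ^ (a - 1) * (1 - t) ^ (b - 1) * f t) volume 0 1 := by
  obtain ⟨M, hM⟩ := isCompact_Icc.exists_bound_of_continuousOn hf
  have hM0 : 0 ≤ M := le_trans (norm_nonneg _) (hM 0 ⟨le_refl _, zero_le_one⟩)
  refine ((betaIntegrable ha hb).const_mul M).mono_fun ?_ ?_
  · have hfm : AEStronglyMeasurable f (volume.restrict (Set.Icc (0:ℝ) 1)) :=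
      hf.aestronglyMeasurable measurableSet_Icc
    have hsub : volume.restrict (Set.uIoc (0:ℝ) 1) ≤ volume.restrict (Set.Icc (0:ℝ) 1) := by
      apply Measure.restrict_mono _ le_rfl
      rw [Set.uIoc_of_le (zero_le_one : (0:ℝ) ≤ 1)]
      exact Set.Ioc_subset_Icc_self
    exact (weight_meas.aestronglyMeasurable.mono_measure hsub).mul (hfm.mono_measure hsub)
  · filter_upwards [ae_restrict_mem measurableSet_uIoc] with t ht
    rw [Set.uIoc_of_le (zero_le_one : (0:ℝ) ≤ 1)] at ht
    obtain ⟨ht0, ht1⟩ := ht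
    have hw := weight_nonneg (a := a) (b := b) ht0.le ht1
    rw [Real.norm_eq_abs, Real.norm_eq_abs, abs_mul, abs_of_nonneg hw,
      abs_of_nonneg (mul_nonneg hM0 hw)]
    have h1 : |f t| ≤ M := by
      rw [← Real.norm_eq_abs]; exact hM t ⟨ht0.le, ht1⟩
    calc t ^ (a-1) * (1-t) ^ (b-1) * |f t|
        ≤ t ^ (a-1) * (1-t) ^ (b-1) * M := mul_le_mul_of_nonneg_left h1 hw
      _ = M * (t ^ (a-1) * (1-t) ^ (b-1)) := mul_comm _ _

lemma integral_weight_pow {a b : ℝ} (ha : 0 < a) (hb : 0 < b) (j : ℕ) :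
    ∫ t in (0:ℝ)..1, t ^ (a - 1) * (1 - t) ^ (b - 1) * t ^ j = betaFn (a + j) b := by
  rw [betaFn]
  refine intervalIntegral.integral_congr fun t ht => ?_
  rw [Set.uIcc_of_le (zero_le_one : (0:ℝ) ≤ 1)] at ht
  rw [mul_right_comm, rpow_mul_pow ha j ht.1]

lemma integral_weight_var {a b : ℝ} (ha : 0 < a) (hb : 0 < b) :
    ∫ t in (0:ℝ)..1, t ^ (a - 1) * (1 - t) ^ (b - 1) * (t - a/(a+b))^2
      = betaFn a b * (a * b / ((a+b)^2 * (a+b+1))) := by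
  set μ := a/(a+b) with hμ
  have hI : ∀ j : ℕ, IntervalIntegrable
      (fun t => t ^ (a - 1) * (1 - t) ^ (b - 1) * t ^ j) volume 0 1 := fun j =>
    weight_mul_integrable ha hb (continuous_pow j).continuousOn
  have split : ∫ t in (0:ℝ)..1, t ^ (a - 1) * (1 - t) ^ (b - 1) * (t - μ)^2
      = (∫ t in (0:ℝ)..1, t ^ (a - 1) * (1 - t) ^ (b - 1) * t ^ 2)
        - (2*μ) * (∫ t in (0:ℝ)..1, t ^ (a - 1) * (1 - t) ^ (b - 1) * t ^ 1)
        + μ^2 * (∫ t in (0:ℝ)..1, t ^ (a - 1) * (1 - t) ^ (b - 1) * t ^ 0) := by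
    rw [← intervalIntegral.integral_const_mul, ← intervalIntegral.integral_const_mul,
      ← intervalIntegral.integral_sub (hI 2) ((hI 1).const_mul _),
      ← intervalIntegral.integral_add (((hI 2).sub ((hI 1).const_mul _))) ((hI 0).const_mul _)]
    refine intervalIntegral.integral_congr fun t ht => ?_
    ring
  rw [split, integral_weight_pow ha hb 2, integral_weight_pow ha hb 1,
    integral_weight_pow ha hb 0]
  push_cast
  have e2 : betaFn (a + 2) b = (a+1)/(a+1+b) * (a/(a+b) * betaFn a b) := by
    rw [show a + (2:ℝ) = (a+1) + 1 by ring, betaFn_succ (by linarith) hb,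
      betaFn_succ ha hb]
  have e1 : betaFn (a + 1) b = a/(a+b) * betaFn a b := betaFn_succ ha hb
  have e0 : betaFn (a + 0) b = betaFn a b := by rw [add_zero]
  rw [e2, e1, e0, hμ]
  have h1 : a + b ≠ 0 := by positivity
  have h2 : a + b + 1 ≠ 0 := by positivity
  have h3 : a + 1 + b ≠ 0 := by positivity
  field_simp
  ring

set_option maxHeartbeats 1000000 in
lemma tendsto_Ffun (n k : ℕ) (hn : 1 ≤ n) (hk : k ≤ n) {f : ℝ → ℝ}
    (hf : ContinuousOn f (Set.Icc 0 1)) :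
    Tendsto (fun ρ : ℝ => Ffun n k ρ f) atTop (nhds (f ((k:ℝ)/(n:ℝ)))) := by
  rcases eq_or_ne k 0 with hk0 | hk0
  · subst hk0
    have e : (fun ρ : ℝ => Ffun n 0 ρ f) = fun _ : ℝ => f 0 := by
      funext ρ; simp [Ffun]
    rw [e, Nat.cast_zero, zero_div]
    exact tendsto_const_nhds
  rcases eq_or_ne k n with hkn | hkn
  · subst hkn
    have hne : ((k:ℝ)) ≠ 0 := Nat.cast_ne_zero.mpr hk0
    simp only [Ffun, if_neg hk0, if_pos rfl, div_self hne]
    exact tendsto_const_nhds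
  -- main case 0 < k < n
  have hklt : k < n := lt_of_le_of_ne hk hkn
  have hkpos : 0 < k := Nat.pos_of_ne_zero hk0
  have hncast : (0:ℝ) < n := by exact_mod_cast Nat.pos_of_ne_zero (by omega)
  set μ : ℝ := (k:ℝ)/(n:ℝ) with hμdef
  have hμ0 : 0 ≤ μ := by positivity
  have hμ1 : μ ≤ 1 := by
    rw [hμdef, div_le_one hncast]; exact_mod_cast hk
  obtain ⟨M, hM⟩ := isCompact_Icc.exists_bound_of_continuousOn hf
  have hM0 : 0 ≤ M := le_trans (norm_nonneg _) (hM 0 ⟨le_refl _, zero_le_one⟩)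
  rw [Metric.tendsto_atTop]
  intro ε hε
  have huc := isCompact_Icc.uniformContinuousOn_of_continuous hf
  rw [Metric.uniformContinuousOn_iff] at huc
  obtain ⟨δ, hδ, hδ'⟩ := huc (ε/2) (by linarith)
  set C := 2*M/δ^2 with hC
  have hC0 : 0 ≤ C := by positivity
  refine ⟨max 1 (2*(C+1)/ε), fun ρ hρ => ?_⟩
  have hρ1 : 1 ≤ ρ := le_trans (le_max_left _ _) hρ
  have hρ0 : 0 < ρ := by linarith
  have hρε : C/ρ < ε/2 := by
    have h1 : 2*(C+1)/ε ≤ ρ := le_trans (le_max_right _ _) hρ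
    have h2 : 2*(C+1) ≤ ρ*ε := (div_le_iff₀ hε).mp h1
    rw [div_lt_iff₀ hρ0]
    nlinarith
  set a := (k:ℝ)*ρ with hadef
  set b := ((n:ℝ)-(k:ℝ))*ρ with hbdef
  have ha : 0 < a := mul_pos (by exact_mod_cast hkpos) hρ0
  have hbp : 0 < b := mul_pos (by
    rw [sub_pos]; exact_mod_cast hklt) hρ0
  have hab : a + b = n*ρ := by rw [hadef, hbdef]; ring
  have hμab : a/(a+b) = μ := by
    rw [hab, hadef, hμdef]
    field_simp
  have hβ := betaFn_pos ha hbp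
  have key : Ffun n k ρ f
      = (betaFn a b)⁻¹ * ∫ t in (0:ℝ)..1, t^(a-1)*(1-t)^(b-1) * f t := by
    simp only [Ffun, if_neg hk0, if_neg hkn]
    rfl
  rw [Real.dist_eq, key]
  -- pointwise bound
  have hpt : ∀ t ∈ Set.Icc (0:ℝ) 1, |f t - f μ| ≤ ε/2 + C*(t-μ)^2 := by
    intro t ht
    rcases lt_or_ge (dist t μ) δ with h | h
    · have h1 := hδ' t ht μ ⟨hμ0, hμ1⟩ h
      rw [Real.dist_eq] at h1
      have h2 : 0 ≤ C*(t-μ)^2 := by positivity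
      linarith
    · rw [Real.dist_eq] at h
      have h2 : δ^2 ≤ (t-μ)^2 := by
        rw [← sq_abs (t-μ)]
        exact pow_le_pow_left₀ hδ.le h 2
      have hft : |f t - f μ| ≤ 2*M := by
        have h3 := hM t ht
        have h4 := hM μ ⟨hμ0, hμ1⟩
        rw [Real.norm_eq_abs] at h3 h4
        calc |f t - f μ| ≤ |f t| + |f μ| := abs_sub _ _
          _ ≤ 2*M := by linarith
      have hδ2 : (0:ℝ) < δ^2 := by positivity
      have e : C*δ^2 = 2*M := by rw [hC]; field_simp
      have h5 : C*δ^2 ≤ C*(t-μ)^2 := mul_le_mul_of_nonneg_left h2 hC0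
      linarith
  have hw_int := betaIntegrable ha hbp
  have hf_int := weight_mul_integrable ha hbp hf
  have hconst_int : IntervalIntegrable
      (fun t => t^(a-1)*(1-t)^(b-1) * f μ) volume 0 1 := hw_int.mul_const _
  have hβdef : (∫ t in (0:ℝ)..1, t^(a-1)*(1-t)^(b-1)) = betaFn a b := rfl
  have hsub : (∫ t in (0:ℝ)..1,
        (t^(a-1)*(1-t)^(b-1) * f t - t^(a-1)*(1-t)^(b-1) * f μ))
      = (∫ t in (0:ℝ)..1, t^(a-1)*(1-t)^(b-1) * f t) - f μ * betaFn a b := by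
    rw [intervalIntegral.integral_sub hf_int hconst_int]
    congr 1
    rw [intervalIntegral.integral_mul_const, hβdef, mul_comm]
  have hdiff : (betaFn a b)⁻¹ * (∫ t in (0:ℝ)..1, t^(a-1)*(1-t)^(b-1) * f t) - f μ
      = (betaFn a b)⁻¹ * ∫ t in (0:ℝ)..1,
        (t^(a-1)*(1-t)^(b-1) * f t - t^(a-1)*(1-t)^(b-1) * f μ) := by
    rw [hsub, mul_sub]
    congr 1
    field_simp
  rw [hdiff]
  have hsq_cont : ContinuousOn (fun t : ℝ => ε/2 + C*(t-μ)^2) (Set.Icc 0 1) :=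
    (Continuous.continuousOn (continuous_const.add (continuous_const.mul
      ((continuous_id.sub continuous_const).pow 2))))
  have hrhs_int : IntervalIntegrable
      (fun t => t^(a-1)*(1-t)^(b-1) * (ε/2 + C*(t-μ)^2)) volume 0 1 :=
    weight_mul_integrable ha hbp hsq_cont
  have habs : |∫ t in (0:ℝ)..1,
        (t^(a-1)*(1-t)^(b-1) * f t - t^(a-1)*(1-t)^(b-1) * f μ)|
      ≤ ∫ t in (0:ℝ)..1,
        |t^(a-1)*(1-t)^(b-1) * f t - t^(a-1)*(1-t)^(b-1) * f μ| :=
    intervalIntegral.abs_integral_le_integral_abs zero_le_one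
  have hmono : (∫ t in (0:ℝ)..1,
        |t^(a-1)*(1-t)^(b-1) * f t - t^(a-1)*(1-t)^(b-1) * f μ|)
      ≤ ∫ t in (0:ℝ)..1, t^(a-1)*(1-t)^(b-1) * (ε/2 + C*(t-μ)^2) := by
    refine intervalIntegral.integral_mono_on zero_le_one
      ((hf_int.sub hconst_int).abs) hrhs_int fun t ht => ?_
    have hw := weight_nonneg (a := a) (b := b) ht.1 ht.2
    rw [← mul_sub, abs_mul, abs_of_nonneg hw]
    exact mul_le_mul_of_nonneg_left (hpt t ht) hw
  have hvar_int := integral_weight_var ha hbp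
  rw [hμab] at hvar_int
  have hsq_int : IntervalIntegrable
      (fun t => t^(a-1)*(1-t)^(b-1) * (t-μ)^2) volume 0 1 :=
    weight_mul_integrable ha hbp (Continuous.continuousOn
      ((continuous_id.sub continuous_const).pow 2))
  have hrhs_val : (∫ t in (0:ℝ)..1, t^(a-1)*(1-t)^(b-1) * (ε/2 + C*(t-μ)^2))
      = ε/2 * betaFn a b + C * (betaFn a b * (a*b/((a+b)^2*(a+b+1)))) := by
    have e : (∫ t in (0:ℝ)..1, t^(a-1)*(1-t)^(b-1) * (ε/2 + C*(t-μ)^2))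
        = ∫ t in (0:ℝ)..1, (ε/2 * (t^(a-1)*(1-t)^(b-1))
            + C * (t^(a-1)*(1-t)^(b-1) * (t-μ)^2)) := by
      refine intervalIntegral.integral_congr fun t _ => ?_
      ring
    rw [e, intervalIntegral.integral_add (hw_int.const_mul _) (hsq_int.const_mul _),
      intervalIntegral.integral_const_mul, intervalIntegral.integral_const_mul,
      hβdef, hvar_int]
  have hvar_le : a*b/((a+b)^2*(a+b+1)) ≤ 1/ρ := by
    have h1 : a*b ≤ (a+b)^2 := by nlinarith
    have h2 : ρ ≤ a+b+1 := by
      rw [hab]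
      have : (1:ℝ) ≤ n := by exact_mod_cast hn
      nlinarith
    rw [div_le_div_iff₀ (by positivity) hρ0]
    nlinarith [sq_nonneg (a+b), mul_pos ha hbp]
  calc |(betaFn a b)⁻¹ * ∫ t in (0:ℝ)..1,
        (t^(a-1)*(1-t)^(b-1) * f t - t^(a-1)*(1-t)^(b-1) * f μ)|
      = (betaFn a b)⁻¹ * |∫ t in (0:ℝ)..1,
        (t^(a-1)*(1-t)^(b-1) * f t - t^(a-1)*(1-t)^(b-1) * f μ)| := by
        rw [abs_mul, abs_of_nonneg (le_of_lt (inv_pos.mpr hβ))]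
    _ ≤ (betaFn a b)⁻¹ * (ε/2 * betaFn a b
          + C * (betaFn a b * (a*b/((a+b)^2*(a+b+1))))) := by
        refine mul_le_mul_of_nonneg_left ?_ (le_of_lt (inv_pos.mpr hβ))
        rw [← hrhs_val]
        exact le_trans habs hmono
    _ = ε/2 + C * (a*b/((a+b)^2*(a+b+1))) := by field_simp
    _ ≤ ε/2 + C * (1/ρ) := by
        have := mul_le_mul_of_nonneg_left hvar_le hC0
        linarith
    _ < ε := by
        have : C * (1/ρ) = C/ρ := by ring
        rw [this]
        linarith

lemma Ffun_eval_poly (n k : ℕ) {ρ : ℝ} (hρ : 0 < ρ) (hk : k ≤ n)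
    (p : Polynomial ℝ) (hdeg : p.natDegree ≤ n) :
    Ffun n k ρ (fun x => p.eval x)
      = ∑ j ∈ Finset.range (n+1), p.coeff j * Ffun n k ρ (fun x => x ^ j) := by
  have hev : ∀ x : ℝ, p.eval x = ∑ j ∈ Finset.range (n+1), p.coeff j * x ^ j :=
    fun x => Polynomial.eval_eq_sum_range' (Nat.lt_succ_of_le hdeg) x
  rcases eq_or_ne k 0 with rfl | hk0
  · simp only [Ffun, if_pos rfl]
    exact hev 0
  rcases eq_or_ne k n with rfl | hkn'
  · simp only [Ffun, if_neg hk0, if_pos rfl]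
    exact hev 1
  · have hklt : k < n := lt_of_le_of_ne hk hkn'
    have ha : 0 < (k:ℝ)*ρ :=
      mul_pos (by exact_mod_cast Nat.pos_of_ne_zero hk0) hρ
    have hb : 0 < ((n:ℝ)-(k:ℝ))*ρ :=
      mul_pos (by rw [sub_pos]; exact_mod_cast hklt) hρ
    simp only [Ffun, if_neg hk0, if_neg hkn']
    set a := (k:ℝ)*ρ
    set b := ((n:ℝ)-(k:ℝ))*ρ
    have e1 : (∫ t in (0:ℝ)..1, t^(a-1)*(1-t)^(b-1) * p.eval t)
        = ∑ j ∈ Finset.range (n+1),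
            p.coeff j * ∫ t in (0:ℝ)..1, t^(a-1)*(1-t)^(b-1) * t^j := by
      simp_rw [← intervalIntegral.integral_const_mul]
      rw [← intervalIntegral.integral_finset_sum (fun j _ =>
        ((weight_mul_integrable ha hb (continuous_pow j).continuousOn).const_mul
          (p.coeff j)))]
      refine intervalIntegral.integral_congr fun t _ => ?_
      rw [hev t, Finset.mul_sum]
      exact Finset.sum_congr rfl fun j _ => by ring
    rw [e1, Finset.mul_sum]
    exact Finset.sum_congr rfl fun j _ => by ring

set_option maxHeartbeats 1000000 in
/-- For every `n ≥ 1` and continuous `f : [0,1] → ℝ`, the generalized divided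
difference `[F_{n,0}^ρ,…,F_{n,n}^ρ; f]` (the coefficient of `x^n` in `L_n^ρ f`)
converges, as `ρ → ∞`, to the classical divided difference
`[0, 1/n, …, 1; f]` (the coefficient of `x^n` in the Lagrange polynomial of `f`
at the nodes `k/n`). -/
theorem tendsto_coeff_dividedDifference (n : ℕ) (hn : 1 ≤ n)
    (f : ℝ → ℝ) (hf : ContinuousOn f (Set.Icc 0 1))
    (L : ℝ → Polynomial ℝ)
    (hLdeg : ∀ ρ : ℝ, 0 < ρ → (L ρ).natDegree ≤ n)
    (hL : ∀ ρ : ℝ, 0 < ρ → ∀ k ≤ n,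
      Ffun n k ρ (fun x => (L ρ).eval x) = Ffun n k ρ f)
    (Lg : Polynomial ℝ) (hLgdeg : Lg.natDegree ≤ n)
    (hLg : ∀ k ≤ n, Lg.eval ((k : ℝ) / (n : ℝ)) = f ((k : ℝ) / (n : ℝ))) :
    Filter.Tendsto (fun ρ : ℝ => (L ρ).coeff n) Filter.atTop (nhds (Lg.coeff n)) := by
  classical
  have hn0 : (n:ℝ) ≠ 0 := Nat.cast_ne_zero.mpr (by omega)
  set v : Fin (n+1) → ℝ := fun k => ((k:ℕ):ℝ) / (n:ℝ) with hv
  set V : Matrix (Fin (n+1)) (Fin (n+1)) ℝ := Matrix.vandermonde v with hV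
  have hinj : Function.Injective v := by
    intro i j h
    simp only [hv] at h
    have hnat : (i:ℕ) = (j:ℕ) := by
      field_simp at h
      exact_mod_cast h
    exact Fin.ext hnat
  have hdetV : V.det ≠ 0 := by
    rw [hV, Matrix.det_vandermonde]
    refine Finset.prod_ne_zero_iff.mpr fun i _ => ?_
    refine Finset.prod_ne_zero_iff.mpr fun j hj => ?_
    exact sub_ne_zero.mpr (fun hc => (Finset.mem_Ioi.mp hj).ne' (hinj hc))
  set M : ℝ → Matrix (Fin (n+1)) (Fin (n+1)) ℝ :=
    fun ρ => Matrix.of fun k j => Ffun n (k:ℕ) ρ (fun x => x ^ (j:ℕ)) with hM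
  set bvec : ℝ → (Fin (n+1) → ℝ) := fun ρ k => Ffun n (k:ℕ) ρ f with hb
  set bstar : Fin (n+1) → ℝ := fun k => f (v k) with hbs
  set cvec : ℝ → (Fin (n+1) → ℝ) := fun ρ j => (L ρ).coeff (j:ℕ) with hc
  set cstar : Fin (n+1) → ℝ := fun j => Lg.coeff (j:ℕ) with hcs
  have hMc : ∀ ρ : ℝ, 0 < ρ → (M ρ).mulVec (cvec ρ) = bvec ρ := by
    intro ρ hρ
    funext k
    have h1 := hL ρ hρ (k:ℕ) k.is_le
    have h2 := Ffun_eval_poly n (k:ℕ) hρ k.is_le (L ρ) (hLdeg ρ hρ)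
    simp only [Matrix.mulVec, dotProduct, hM, Matrix.of_apply, hc, hb]
    rw [← h1, h2, ← Fin.sum_univ_eq_sum_range
      (fun j => (L ρ).coeff j * Ffun n (k:ℕ) ρ (fun x => x ^ j))]
    exact Finset.sum_congr rfl fun j _ => mul_comm _ _
  have hMlim : Filter.Tendsto M Filter.atTop (nhds V) := by
    refine tendsto_pi_nhds.mpr ?_
    intro k
    rw [tendsto_pi_nhds]
    intro j
    have := tendsto_Ffun n (k:ℕ) hn k.is_le
      (f := fun x => x ^ (j:ℕ)) ((continuous_pow (j:ℕ)).continuousOn)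
    simpa [hM, hV, Matrix.vandermonde, hv] using this
  have hblim : Filter.Tendsto bvec Filter.atTop (nhds bstar) :=
    tendsto_pi_nhds.mpr fun k => tendsto_Ffun n (k:ℕ) hn k.is_le hf
  have hdetlim : Filter.Tendsto (fun ρ => (M ρ).det) Filter.atTop (nhds V.det) :=
    ((Continuous.matrix_det continuous_id).tendsto V).comp hMlim
  have hadjlim : Filter.Tendsto (fun ρ => (M ρ).adjugate) Filter.atTop
      (nhds V.adjugate) :=
    ((Continuous.matrix_adjugate continuous_id).tendsto V).comp hMlim
  have hinvlim : Filter.Tendsto (fun ρ => (M ρ)⁻¹) Filter.atTop (nhds V⁻¹) := by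
    simp only [Matrix.inv_def, Ring.inverse_eq_inv']
    exact (hdetlim.inv₀ hdetV).smul hadjlim
  have hglim : Filter.Tendsto (fun ρ => (M ρ)⁻¹.mulVec (bvec ρ)) Filter.atTop
      (nhds (V⁻¹.mulVec bstar)) := by
    rw [tendsto_pi_nhds]
    intro j
    simp only [Matrix.mulVec, dotProduct]
    apply tendsto_finset_sum
    intro i _
    exact (tendsto_pi_nhds.mp (tendsto_pi_nhds.mp hinvlim j) i).mul
      (tendsto_pi_nhds.mp hblim i)
  have hVc : V.mulVec cstar = bstar := by
    funext k
    have hev := Polynomial.eval_eq_sum_range' (Nat.lt_succ_of_le hLgdeg) (v k)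
    have hval := hLg (k:ℕ) k.is_le
    simp only [Matrix.mulVec, dotProduct, hV, Matrix.vandermonde, hcs, hbs,
      Matrix.of_apply]
    rw [show f (v k) = Lg.eval (v k) from (hval).symm, hev,
      ← Fin.sum_univ_eq_sum_range (fun j => Lg.coeff j * v k ^ j)]
    exact Finset.sum_congr rfl fun j _ => mul_comm _ _
  have hcstar : cstar = V⁻¹.mulVec bstar := by
    rw [← hVc, Matrix.mulVec_mulVec,
      Matrix.nonsing_inv_mul V (isUnit_iff_ne_zero.mpr hdetV), Matrix.one_mulVec]
  have hevent : ∀ᶠ ρ in Filter.atTop, cvec ρ = (M ρ)⁻¹.mulVec (bvec ρ) := by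
    have h1 : ∀ᶠ ρ in Filter.atTop, (M ρ).det ≠ 0 := hdetlim.eventually_ne hdetV
    filter_upwards [h1, Filter.eventually_gt_atTop 0] with ρ hd hρ
    rw [← hMc ρ hρ, Matrix.mulVec_mulVec,
      Matrix.nonsing_inv_mul _ (isUnit_iff_ne_zero.mpr hd), Matrix.one_mulVec]
  have hclim : Filter.Tendsto cvec Filter.atTop (nhds cstar) := by
    rw [hcstar]
    exact hglim.congr' (Filter.EventuallyEq.symm hevent)
  have hfinal := tendsto_pi_nhds.mp hclim ⟨n, Nat.lt_succ_self n⟩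
  simpa [hc, hcs] using hfinal
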